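/- If a_ℓ ~ A·ℓ^{-1}·(8/e²)^ℓ·ℓ^{2ℓ} as ℓ → ∞ for a positive constant A, then S_n := ∑_{j=1}^{n} C(n,j)·a_j satisfies S_n ~ a_n as n → ∞; that is, the summand with j = n dominates the sum. -/

import Mathlib

open Filter Real

noncomputable section

noncomputable def lb (A : ℝ) (ℓ : ℕ) : ℝ :=
  A * (ℓ : ℝ)⁻¹ * (8 / Real.exp 1 ^ 2) ^ ℓ * (ℓ : ℝ) ^ (2 * ℓ)

lemma e2lt8 : Real.exp 1 ^ 2 < 8 := by
  have h := Real.exp_one_lt_d9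
  nlinarith [Real.exp_pos 1]

lemma e2pos : (0:ℝ) < Real.exp 1 ^ 2 := by positivity

lemma lb_pos {A : ℝ} (hA : 0 < A) {ℓ : ℕ} (hℓ : 1 ≤ ℓ) : 0 < lb A ℓ := by
  have : (0:ℝ) < ℓ := by exact_mod_cast hℓ
  have h8 : (0:ℝ) < 8 / Real.exp 1 ^ 2 := by positivity
  unfold lb; positivity

lemma term_bound {A : ℝ} (hA : 0 < A) (j k : ℕ) (hj : 1 ≤ j) (hk : 1 ≤ k) :
    ((j + k).choose j : ℝ) * lb A j ≤
      lb A (j + k) * (Real.exp 1 ^ 2 / (8 * (j + k))) ^ k := by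
  obtain ⟨m, rfl⟩ : ∃ m, j = m + 1 := ⟨j - 1, by omega⟩
  set n : ℕ := m + 1 + k with hn
  have hjpos : (0:ℝ) < (m + 1 : ℕ) := by positivity
  have hnpos : (0:ℝ) < (n : ℕ) := by positivity
  have hE : (0:ℝ) < Real.exp 1 ^ 2 := e2pos
  have hc : (0:ℝ) < 8 / Real.exp 1 ^ 2 := by positivity
  -- reduce both sides
  have hL : ((n).choose (m+1) : ℝ) * lb A (m+1) =
      ((n).choose (m+1) : ℝ) * (A * (8 / Real.exp 1 ^ 2) ^ (m+1) * ((m+1:ℕ):ℝ) ^ (2*m+1)) := by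
    unfold lb
    field_simp
    ring
  have hR : lb A n * (Real.exp 1 ^ 2 / (8 * n)) ^ k =
      ((n:ℝ) ^ k) * (A * (8 / Real.exp 1 ^ 2) ^ (m+1) * ((n:ℕ):ℝ) ^ (2*m+1)) := by
    unfold lb
    rw [show 2 * n = (2*m+1) + k + (k + 1) by omega]
    rw [show (8 / Real.exp 1 ^ 2) ^ n = (8 / Real.exp 1 ^ 2) ^ (m+1) * (8 / Real.exp 1 ^ 2) ^ k by rw [hn, pow_add]]
    rw [show ((n:ℕ):ℝ)^((2*m+1)+k+(k+1)) = ((n:ℕ):ℝ)^(2*m+1) * ((n:ℕ):ℝ)^k * ((n:ℕ):ℝ)^k * ((n:ℕ):ℝ) by ring]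
    have e1 : ((n:ℕ):ℝ)⁻¹ * ((n:ℕ):ℝ) = 1 := inv_mul_cancel₀ hnpos.ne'
    have e2 : (Real.exp 1 ^ 2 / (8 * ((n:ℕ):ℝ))) ^ k * (8 / Real.exp 1 ^ 2) ^ k = (((n:ℕ):ℝ)^k)⁻¹ := by
      rw [← mul_pow, ← inv_pow]; congr 1; field_simp
    have e3 : ((n:ℕ):ℝ)^k * (((n:ℕ):ℝ)^k)⁻¹ = 1 := mul_inv_cancel₀ (by positivity)
    linear_combination (A * (8 / Real.exp 1 ^ 2)^(m+1) * ((n:ℕ):ℝ)^(2*m+1) * ((n:ℕ):ℝ)^k * ((n:ℕ):ℝ)^k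
        * ((Real.exp 1 ^ 2 / (8 * ((n:ℕ):ℝ))) ^ k * (8 / Real.exp 1 ^ 2) ^ k)) * e1
      + (A * (8 / Real.exp 1 ^ 2)^(m+1) * ((n:ℕ):ℝ)^(2*m+1) * ((n:ℕ):ℝ)^k * ((n:ℕ):ℝ)^k) * e2
      + (A * (8 / Real.exp 1 ^ 2)^(m+1) * ((n:ℕ):ℝ)^(2*m+1) * ((n:ℕ):ℝ)^k) * e3
  rw [show ((m+1:ℕ):ℝ) + (k:ℝ) = ((n:ℕ):ℝ) by push_cast [hn]; ring, hL, hR]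
  have hcb : ((n).choose (m+1) : ℝ) * ((m+1:ℕ):ℝ) ^ (2*m+1) ≤ ((n:ℝ) ^ k) * ((n:ℕ):ℝ) ^ (2*m+1) := by
    have h1 : ((n).choose (m+1) : ℝ) ≤ (n:ℝ) ^ k := by
      have he : (n).choose (m+1) = (n).choose k := by
        rw [← Nat.choose_symm (by omega : m+1 ≤ n)]
        congr 1
        omega
      rw [he]
      exact_mod_cast Nat.choose_le_pow n k
    have h2 : ((m+1:ℕ):ℝ) ^ (2*m+1) ≤ ((n:ℕ):ℝ) ^ (2*m+1) := by
      gcongr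
      exact_mod_cast Nat.le_add_right (m+1) k
    have := mul_le_mul h1 h2 (by positivity) (by positivity)
    exact this
  calc ((n).choose (m+1) : ℝ) * (A * (8 / Real.exp 1 ^ 2) ^ (m+1) * ((m+1:ℕ):ℝ) ^ (2*m+1))
      = (((n).choose (m+1) : ℝ) * ((m+1:ℕ):ℝ) ^ (2*m+1)) * (A * (8 / Real.exp 1 ^ 2) ^ (m+1)) := by ring
    _ ≤ (((n:ℝ) ^ k) * ((n:ℕ):ℝ) ^ (2*m+1)) * (A * (8 / Real.exp 1 ^ 2) ^ (m+1)) := by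
        apply mul_le_mul_of_nonneg_right hcb (by positivity)
    _ = ((n:ℝ) ^ k) * (A * (8 / Real.exp 1 ^ 2) ^ (m+1) * ((n:ℕ):ℝ) ^ (2*m+1)) := by ring

lemma geom_piece {x : ℝ} (hx0 : 0 ≤ x) (hx : x ≤ 1/2) (n : ℕ) :
    ∑ j ∈ Finset.Icc 1 (n-1), x ^ (n - j) ≤ 2 * x := by
  rcases Nat.eq_zero_or_pos n with h0 | hpos
  · subst h0; simp; positivity
  have : Finset.Icc 1 (n-1) = Finset.Ico 1 n := by
    rw [← Finset.Ico_add_one_right_eq_Icc]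
    congr 1
    omega
  rw [this, Finset.sum_Ico_eq_sum_range]
  calc ∑ i ∈ Finset.range (n-1), x ^ (n - (1 + i))
      ≤ ∑ i ∈ Finset.range (n-1), (1/2:ℝ) ^ (n-1-1-i) * x := by
        apply Finset.sum_le_sum
        intro i hi
        rw [Finset.mem_range] at hi
        rw [show n - (1+i) = (n-1-1-i) + 1 by omega, pow_succ]
        exact mul_le_mul_of_nonneg_right (pow_le_pow_left₀ hx0 hx _) hx0
    _ = (∑ i ∈ Finset.range (n-1), (1/2:ℝ) ^ (n-1-1-i)) * x := by
        rw [Finset.sum_mul]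
    _ ≤ 2 * x := by
        apply mul_le_mul_of_nonneg_right _ hx0
        rw [Finset.sum_range_reflect (fun i => (1/2:ℝ)^i) (n-1)]
        exact sum_geometric_two_le _

lemma sum_bound {A : ℝ} (hA : 0 < A) {n : ℕ} (hn : 2 ≤ n) :
    ∑ j ∈ Finset.Icc 1 (n-1), (n.choose j : ℝ) * lb A j ≤
      lb A n * (2 * (Real.exp 1 ^ 2 / (8 * n))) := by
  have hnR : (0:ℝ) < n := by exact_mod_cast (by omega : 0 < n)
  have hx0 : (0:ℝ) ≤ Real.exp 1 ^ 2 / (8 * n) := by positivity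
  have hx : Real.exp 1 ^ 2 / (8 * n) ≤ 1/2 := by
    have h2n : (2:ℝ) ≤ (n:ℝ) := by exact_mod_cast hn
    rw [div_le_iff₀ (by positivity)]
    nlinarith [e2lt8]
  calc ∑ j ∈ Finset.Icc 1 (n-1), (n.choose j : ℝ) * lb A j
      ≤ ∑ j ∈ Finset.Icc 1 (n-1), lb A n * (Real.exp 1 ^ 2 / (8 * n)) ^ (n - j) := by
        apply Finset.sum_le_sum
        intro j hj
        rw [Finset.mem_Icc] at hj
        have h := term_bound hA j (n - j) hj.1 (by omega)
        rw [show j + (n - j) = n by omega] at h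
        rw [show ((j:ℝ) + ((n - j : ℕ):ℝ)) = (n:ℝ) by
          exact_mod_cast congrArg (Nat.cast : ℕ → ℝ) (show j + (n-j) = n by omega)] at h
        exact h
    _ = lb A n * ∑ j ∈ Finset.Icc 1 (n-1), (Real.exp 1 ^ 2 / (8 * n)) ^ (n - j) := by
        rw [Finset.mul_sum]
    _ ≤ lb A n * (2 * (Real.exp 1 ^ 2 / (8 * n))) := by
        apply mul_le_mul_of_nonneg_left (geom_piece hx0 hx n) (lb_pos hA (by omega)).le

lemma lb_lower {A : ℝ} (hA : 0 < A) (N : ℕ) {n : ℕ} (hn : N + 2 ≤ n) :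
    A * (n:ℝ) ^ (N+1) ≤ lb A n := by
  have hn1 : (1:ℝ) ≤ (n:ℝ) := by exact_mod_cast (by omega : 1 ≤ n)
  have hnpos : (0:ℝ) < n := by linarith
  have hc1 : (1:ℝ) ≤ 8 / Real.exp 1 ^ 2 := by
    rw [le_div_iff₀ e2pos]; nlinarith [e2lt8]
  have key : lb A n = A * ((8 / Real.exp 1 ^ 2) ^ n * (n:ℝ) ^ (2*n - 1)) := by
    unfold lb
    rw [show 2*n = (2*n-1)+1 by omega, pow_succ]
    field_simp
    ring_nf
    rw [show 1 + (n*2-1) - 1 = n*2-1 by omega]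
  rw [key]
  have h1 : (1:ℝ) ≤ (8 / Real.exp 1 ^ 2) ^ n := one_le_pow₀ hc1
  have h2 : (n:ℝ) ^ (N+1) ≤ (n:ℝ) ^ (2*n-1) := pow_le_pow_right₀ hn1 (by omega)
  have := mul_le_mul h1 h2 (by positivity) (by positivity)
  calc A * (n:ℝ)^(N+1) = A * (1 * (n:ℝ)^(N+1)) := by ring
    _ ≤ A * ((8 / Real.exp 1 ^ 2) ^ n * (n:ℝ) ^ (2*n-1)) :=
        mul_le_mul_of_nonneg_left this hA.le

/- STATEMENT 9: If a_ℓ ~ A·ℓ⁻¹·(8/e²)^ℓ·ℓ^{2ℓ} with A > 0, then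
S_n = ∑_{j=1}^n C(n,j)·a_j satisfies S_n ~ a_n (the j = n summand dominates). -/
theorem laplace_top_term_dominates (a : ℕ → ℝ) (A : ℝ) (hA : 0 < A)
    (ha : Tendsto (fun ℓ : ℕ => a ℓ /
        (A * (ℓ : ℝ)⁻¹ * (8 / Real.exp 1 ^ 2) ^ ℓ * (ℓ : ℝ) ^ (2 * ℓ))) atTop (nhds 1)) :
    Tendsto (fun n : ℕ =>
        (∑ j ∈ Finset.Icc 1 n, (n.choose j : ℝ) * a j) / a n) atTop (nhds 1) := by
  have ha' : Tendsto (fun ℓ : ℕ => a ℓ / lb A ℓ) atTop (nhds 1) := ha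
  have h1 : ∀ᶠ n in atTop, a n / lb A n ∈ Set.Icc (1/2 : ℝ) 2 :=
    ha' (Icc_mem_nhds (by norm_num) (by norm_num))
  rw [eventually_atTop] at h1
  obtain ⟨N0, hN0⟩ := h1
  set N := max N0 2 with hNdef
  have hN2 : 2 ≤ N := le_max_right _ _
  have hbnd : ∀ n, N ≤ n → lb A n / 2 ≤ a n ∧ a n ≤ 2 * lb A n := by
    intro n hn
    have hb : 0 < lb A n := lb_pos hA (by omega)
    obtain ⟨hl, hr⟩ := hN0 n (le_trans (le_max_left _ _) hn)
    constructor
    · have := (le_div_iff₀ hb).mp hl; linarith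
    · have := (div_le_iff₀ hb).mp hr; linarith
  set M : ℝ := ∑ j ∈ Finset.Icc 1 N, |a j| with hMdef
  have hM0 : 0 ≤ M := Finset.sum_nonneg fun j _ => abs_nonneg _
  set R : ℕ → ℝ := fun n => ∑ j ∈ Finset.Icc 1 (n-1), (n.choose j : ℝ) * a j with hRdef
  -- key bound
  have hkey : ∀ n, N + 2 ≤ n →
      |R n / a n| ≤ (2*M/A + Real.exp 1 ^ 2) / (n:ℝ) := by
    intro n hn
    have hb : 0 < lb A n := lb_pos hA (by omega)
    have hn1R : (1:ℝ) ≤ (n:ℝ) := by exact_mod_cast (by omega : 1 ≤ n)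
    have hnR : (0:ℝ) < n := by linarith
    obtain ⟨hal, har⟩ := hbnd n (by omega)
    have ha_pos : 0 < a n := lt_of_lt_of_le (by positivity) hal
    -- split the sum
    have hIcc : Finset.Icc 1 (n-1) = Finset.Ioc 0 (n-1) := (Finset.Icc_add_one_left_eq_Ioc 0 (n-1))
    have hsplit : (∑ j ∈ Finset.Ioc 0 N, (n.choose j : ℝ) * a j)
        + (∑ j ∈ Finset.Ioc N (n-1), (n.choose j : ℝ) * a j)
        = R n := by
      rw [hRdef]
      simp only [hIcc]
      exact Finset.sum_Ioc_consecutive _ (Nat.zero_le N) (by omega)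
    -- bound T1
    have hT1 : |∑ j ∈ Finset.Ioc 0 N, (n.choose j : ℝ) * a j| ≤ (n:ℝ)^N * M := by
      calc |∑ j ∈ Finset.Ioc 0 N, (n.choose j : ℝ) * a j|
          ≤ ∑ j ∈ Finset.Ioc 0 N, |(n.choose j : ℝ) * a j| := Finset.abs_sum_le_sum_abs _ _
        _ ≤ ∑ j ∈ Finset.Ioc 0 N, (n:ℝ)^N * |a j| := by
            apply Finset.sum_le_sum
            intro j hj
            rw [Finset.mem_Ioc] at hj
            rw [abs_mul, abs_of_nonneg (by positivity : (0:ℝ) ≤ (n.choose j : ℝ))]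
            apply mul_le_mul_of_nonneg_right _ (abs_nonneg _)
            calc ((n.choose j : ℕ):ℝ) ≤ ((n^j : ℕ):ℝ) := by exact_mod_cast Nat.choose_le_pow n j
              _ = (n:ℝ)^j := by push_cast; ring
              _ ≤ (n:ℝ)^N := pow_le_pow_right₀ hn1R hj.2
        _ = (n:ℝ)^N * M := by
            rw [hMdef, Finset.mul_sum, ← Finset.Icc_add_one_left_eq_Ioc 0 N, zero_add]
    -- bound T2
    have hT2nonneg : 0 ≤ ∑ j ∈ Finset.Ioc N (n-1), (n.choose j : ℝ) * a j := by
      apply Finset.sum_nonneg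
      intro j hj
      rw [Finset.mem_Ioc] at hj
      have hbj : 0 < lb A j := lb_pos hA (by omega)
      have hja := (hbnd j (by omega)).1
      exact mul_nonneg (Nat.cast_nonneg _) (le_of_lt (lt_of_lt_of_le (by positivity) hja))
    have hT2 : ∑ j ∈ Finset.Ioc N (n-1), (n.choose j : ℝ) * a j
        ≤ 2 * (lb A n * (2 * (Real.exp 1 ^ 2 / (8 * n)))) := by
      calc ∑ j ∈ Finset.Ioc N (n-1), (n.choose j : ℝ) * a j
          ≤ ∑ j ∈ Finset.Ioc N (n-1), (n.choose j : ℝ) * (2 * lb A j) := by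
            apply Finset.sum_le_sum
            intro j hj
            rw [Finset.mem_Ioc] at hj
            exact mul_le_mul_of_nonneg_left (hbnd j (by omega)).2 (Nat.cast_nonneg _)
        _ = 2 * ∑ j ∈ Finset.Ioc N (n-1), (n.choose j : ℝ) * lb A j := by
            rw [Finset.mul_sum]; apply Finset.sum_congr rfl; intros; ring
        _ ≤ 2 * ∑ j ∈ Finset.Icc 1 (n-1), (n.choose j : ℝ) * lb A j := by
            apply mul_le_mul_of_nonneg_left _ (by norm_num)
            apply Finset.sum_le_sum_of_subset_of_nonneg
            · rw [hIcc]; exact Finset.Ioc_subset_Ioc (Nat.zero_le N) le_rfl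
            · intro j hj _
              rw [Finset.mem_Icc] at hj
              exact mul_nonneg (Nat.cast_nonneg _) (lb_pos hA hj.1).le
        _ ≤ 2 * (lb A n * (2 * (Real.exp 1 ^ 2 / (8 * n)))) := by
            apply mul_le_mul_of_nonneg_left (sum_bound hA (by omega)) (by norm_num)
    have hRabs : |R n| ≤ (n:ℝ)^N * M + 4 * lb A n * (Real.exp 1 ^ 2 / (8 * n)) := by
      rw [← hsplit]
      calc |(∑ j ∈ Finset.Ioc 0 N, (n.choose j : ℝ) * a j)
            + (∑ j ∈ Finset.Ioc N (n-1), (n.choose j : ℝ) * a j)|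
          ≤ |∑ j ∈ Finset.Ioc 0 N, (n.choose j : ℝ) * a j|
            + |∑ j ∈ Finset.Ioc N (n-1), (n.choose j : ℝ) * a j| := abs_add_le _ _
        _ ≤ (n:ℝ)^N * M + 2 * (lb A n * (2 * (Real.exp 1 ^ 2 / (8 * n)))) := by
            refine add_le_add hT1 ?_
            rw [abs_of_nonneg hT2nonneg]
            exact hT2
        _ = (n:ℝ)^N * M + 4 * lb A n * (Real.exp 1 ^ 2 / (8 * n)) := by ring
    have hnum_nonneg : 0 ≤ (n:ℝ)^N * M + 4 * lb A n * (Real.exp 1 ^ 2 / (8 * n)) :=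
      add_nonneg (mul_nonneg (by positivity) hM0) (by positivity)
    rw [abs_div, abs_of_pos ha_pos]
    have step1 : |R n| / a n
        ≤ ((n:ℝ)^N * M + 4 * lb A n * (Real.exp 1 ^ 2 / (8 * n))) / (lb A n / 2) :=
      div_le_div₀ hnum_nonneg hRabs (by positivity) hal
    refine le_trans step1 ?_
    have hlow := lb_lower hA N hn
    have h4 : M * (n:ℝ)^(N+1) ≤ M / A * lb A n := by
      rw [div_mul_eq_mul_div, le_div_iff₀ hA]
      nlinarith [mul_le_mul_of_nonneg_left hlow hM0]
    have hid : 4 * lb A n * (Real.exp 1 ^ 2 / (8*(n:ℝ))) * (n:ℝ)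
        = lb A n * Real.exp 1 ^ 2 / 2 := by
      field_simp
      ring
    rw [div_le_div_iff₀ (by positivity) hnR]
    calc ((n:ℝ)^N * M + 4 * lb A n * (Real.exp 1 ^2/(8*n))) * n
        = M * ((n:ℝ)^N * n) + 4 * lb A n * (Real.exp 1^2/(8*n)) * n := by ring
      _ = M * (n:ℝ)^(N+1) + lb A n * Real.exp 1^2 / 2 := by rw [← pow_succ, hid]
      _ ≤ M/A * lb A n + lb A n * Real.exp 1^2/2 := by linarith
      _ = (2*M/A + Real.exp 1^2) * (lb A n / 2) := by ring
  -- limit of R n / a n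
  have hRlim : Tendsto (fun n => R n / a n) atTop (nhds 0) := by
    apply squeeze_zero_norm' (a := fun n : ℕ => (2*M/A + Real.exp 1 ^ 2) / (n:ℝ))
    · filter_upwards [eventually_ge_atTop (N+2)] with n hn
      rw [Real.norm_eq_abs]
      exact hkey n hn
    · have h0 : Tendsto (fun n : ℕ => ((n:ℝ))⁻¹) atTop (nhds 0) :=
        tendsto_inv_atTop_zero.comp tendsto_natCast_atTop_atTop
      have := h0.const_mul (2*M/A + Real.exp 1 ^ 2)
      simpa [div_eq_mul_inv] using this
  -- conclude
  have hfinal : (fun n : ℕ => R n / a n + 1) =ᶠ[atTop]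
      (fun n : ℕ => (∑ j ∈ Finset.Icc 1 n, (n.choose j : ℝ) * a j) / a n) := by
    filter_upwards [eventually_ge_atTop (N+2)] with n hn
    have hb : 0 < lb A n := lb_pos hA (by omega)
    have ha_pos : 0 < a n := lt_of_lt_of_le (by positivity) (hbnd n (by omega)).1
    obtain ⟨m, rfl⟩ : ∃ m, n = m + 1 := ⟨n-1, by omega⟩
    rw [Finset.sum_Icc_succ_top (by omega : 1 ≤ m+1), Nat.choose_self]
    push_cast
    rw [add_div, one_mul, div_self ha_pos.ne']
    simp [hRdef]
  have := (hRlim.add (tendsto_const_nhds (x := (1:ℝ)))).congr' hfinal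
  simpa using this


end
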